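/- Let E be a real normed space, K ⊆ E a nontrivial cone with norm-base B_K, and A ⊆ E a nontrivial cone with norm-base B_A. Assume that cl S_{−K} is weakly compact. Then the following are equivalent: (1) cl S_A^0 ∩ cl S_{−K} = ∅; (2) there exists (x*, α) ∈ K^{aw#} with α > 0 such that x*(a) + α‖a‖ > 0 for all a ∈ A \ {0} and x*(k) + α‖k‖ < 0 for all k ∈ (−K) \ {0}; (3) there exists (x*, α) ∈ K^{aw#} such that x*(a) + α‖a‖ > 0 for all a ∈ A \ {0} and x*(k) + α‖k‖ < 0 for all k ∈ (−K) \ {0}. -/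

import Mathlib

open Set

variable {E : Type*} [NormedAddCommGroup E] [NormedSpace ℝ E]

/-- `K` is a cone: contains `0` and is closed under nonnegative scalar multiplication. -/
def IsCone (K : Set E) : Prop :=
  (0 : E) ∈ K ∧ ∀ t : ℝ, 0 ≤ t → ∀ x ∈ K, t • x ∈ K

/-- A cone is nontrivial if it is neither `{0}` nor the whole space. -/
def IsNontrivialCone (K : Set E) : Prop :=
  IsCone K ∧ K ≠ {0} ∧ K ≠ Set.univ

/-- The norm-base of a cone: its intersection with the unit sphere. -/
def normBase (K : Set E) : Set E := {x ∈ K | ‖x‖ = 1}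

/-- Closure of a set with respect to the weak topology `σ(E, E*)`. -/
noncomputable def wClosure (S : Set E) : Set E :=
  (toWeakSpace ℝ E).symm '' closure ((toWeakSpace ℝ E) '' S)

/-- A set is weakly compact if it is compact in the weak topology `σ(E, E*)`. -/
def WeaklyCompact (S : Set E) : Prop :=
  IsCompact ((toWeakSpace ℝ E) '' S)

/-- A set is weakly closed if it equals its weak closure. -/
noncomputable def WeaklyClosed (S : Set E) : Prop :=
  wClosure S = S

/-- The (topological) dual cone `K⁺`. -/
def dualCone (K : Set E) : Set (E →L[ℝ] ℝ) :=
  {f | ∀ k ∈ K, 0 ≤ f k}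

/-- The set `K^#` of functionals strictly positive on `K \ {0}`. -/
def sharpCone (K : Set E) : Set (E →L[ℝ] ℝ) :=
  {f | ∀ k ∈ K, k ≠ 0 → 0 < f k}

/-- The set `K^{w#}` of functionals strictly positive on the weak closure of the norm-base. -/
noncomputable def wSharpCone (K : Set E) : Set (E →L[ℝ] ℝ) :=
  {f | ∀ x ∈ wClosure (normBase K), 0 < f x}

/-- The algebraic interior (core) of a set in a real vector space. -/
def core {X : Type*} [AddCommGroup X] [Module ℝ X] (Ω : Set X) : Set X :=
  {x ∈ Ω | ∀ v : X, ∃ ε > 0, ∀ t ∈ Set.Icc (0 : ℝ) ε, x + t • v ∈ Ω}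

/-- The augmented dual cone `K^{a+}`. -/
def augDualCone (K : Set E) : Set ((E →L[ℝ] ℝ) × ℝ) :=
  {p | 0 ≤ p.2 ∧ ∀ y ∈ K, 0 ≤ p.1 y - p.2 * ‖y‖}

/-- The set `K^{a#}`. -/
def augSharpCone (K : Set E) : Set ((E →L[ℝ] ℝ) × ℝ) :=
  {p | 0 ≤ p.2 ∧ p.1 ∈ sharpCone K ∧ ∀ y ∈ K, y ≠ 0 → 0 < p.1 y - p.2 * ‖y‖}

/-- The set `K^{aw#}`. -/
noncomputable def augWSharpCone (K : Set E) : Set ((E →L[ℝ] ℝ) × ℝ) :=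
  {p | 0 ≤ p.2 ∧ p.1 ∈ sharpCone K ∧ ∀ y ∈ wClosure (normBase K), p.2 < p.1 y}

/-- `S_C = conv(B_C)`. -/
noncomputable def convBase (C : Set E) : Set E := convexHull ℝ (normBase C)

/-- `S_C^0 = conv({0} ∪ B_C)`. -/
noncomputable def convBase0 (C : Set E) : Set E := convexHull ℝ ({0} ∪ normBase C)

section AuxLemmas

variable {E : Type*} [NormedAddCommGroup E] [NormedSpace ℝ E]

noncomputable instance : ContinuousSMul ℝ (WeakSpace ℝ E) :=
  WeakBilin.instContinuousSMul (B := (topDualPairing ℝ E).flip)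

noncomputable instance : LocallyConvexSpace ℝ (WeakSpace ℝ E) :=
  WeakBilin.locallyConvexSpace (B := (topDualPairing ℝ E).flip)

lemma subset_wClosure (S : Set E) : S ⊆ wClosure S := fun x hx =>
  ⟨toWeakSpace ℝ E x, subset_closure ⟨x, hx, rfl⟩, (toWeakSpace ℝ E).symm_apply_apply x⟩

lemma wClosure_subset {S T : Set E} (hST : S ⊆ T) (hT : Convex ℝ T) (hTc : IsClosed T) :
    wClosure S ⊆ T := by
  rintro x ⟨y, hy, rfl⟩
  have h1 : y ∈ closure ((toWeakSpace ℝ E) '' T) :=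
    closure_mono (Set.image_mono hST) hy
  rw [← hT.toWeakSpace_closure ℝ, hTc.closure_eq] at h1
  obtain ⟨z, hz, rfl⟩ := h1
  rwa [(toWeakSpace ℝ E).symm_apply_apply]

lemma normBase_neg (K : Set E) : normBase (-K) = -normBase K := by
  ext x
  simp only [normBase, Set.mem_neg, Set.mem_setOf_eq, Set.mem_sep_iff, norm_neg]

lemma closure_convBase_neg (K : Set E) :
    closure (convBase (-K)) = -closure (convBase K) := by
  rw [convBase, normBase_neg, convexHull_neg, ← neg_closure, convBase]

lemma IsCone.neg {K : Set E} (hK : IsCone K) : IsCone (-K) := by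
  refine ⟨by simpa using hK.1, fun t ht x hx => ?_⟩
  rw [Set.mem_neg] at hx ⊢
  rw [← smul_neg]
  exact hK.2 t ht _ hx

lemma mem_normBase_smul {K : Set E} (hK : IsCone K) {x : E} (hx : x ∈ K) (hx0 : x ≠ 0) :
    ‖x‖⁻¹ • x ∈ normBase K :=
  ⟨hK.2 _ (inv_nonneg.2 (norm_nonneg x)) x hx, norm_smul_inv_norm (𝕜 := ℝ) hx0⟩

lemma normBase_nonempty {K : Set E} (hK : IsNontrivialCone K) : (normBase K).Nonempty := by
  obtain ⟨x, hx, hx0⟩ : ∃ x, x ∈ K ∧ x ≠ 0 := by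
    by_contra h
    push_neg at h
    exact hK.2.1 (Set.eq_singleton_iff_unique_mem.2 ⟨hK.1.1, h⟩)
  exact ⟨_, mem_normBase_smul hK.1 hx hx0⟩

lemma weak_eval_continuous (f : E →L[ℝ] ℝ) :
    Continuous fun x : WeakSpace ℝ E => f ((toWeakSpace ℝ E).symm x) :=
  WeakBilin.eval_continuous ((topDualPairing ℝ E).flip) f

lemma image_neg_toWeakSpace (S : Set E) :
    (toWeakSpace ℝ E) '' (-S) = -((toWeakSpace ℝ E) '' S) := by
  ext x
  constructor
  · rintro ⟨y, hy, rfl⟩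
    rw [Set.mem_neg]
    exact ⟨-y, hy, by rw [map_neg]⟩
  · intro hx
    obtain ⟨y, hy, hxy⟩ := Set.mem_neg.1 hx
    exact ⟨-y, by simpa [Set.mem_neg] using hy, by rw [map_neg, hxy, neg_neg]⟩

end AuxLemmas


lemma scaled_pos {E : Type*} [NormedAddCommGroup E] [NormedSpace ℝ E]
    {f : E →L[ℝ] ℝ} {α u : ℝ} {a : E} (ha0 : a ≠ 0)
    (h1 : -u < f (‖a‖⁻¹ • a)) (huα : u ≤ α) : 0 < f a + α * ‖a‖ := by
  have ht : 0 < ‖a‖ := norm_pos_iff.2 ha0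
  have h2 : -α < ‖a‖⁻¹ * f a :=
    lt_of_le_of_lt (by linarith : -α ≤ -u) (by simpa [map_smul] using h1)
  have h3 := mul_lt_mul_of_pos_left h2 ht
  rw [← mul_assoc, mul_inv_cancel₀ ht.ne', one_mul, mul_neg] at h3
  have h4 : α * ‖a‖ = ‖a‖ * α := mul_comm _ _
  linarith

lemma scaled_neg {E : Type*} [NormedAddCommGroup E] [NormedSpace ℝ E]
    {f : E →L[ℝ] ℝ} {α v : ℝ} {k : E} (hk0 : k ≠ 0)
    (h1 : f (‖k‖⁻¹ • k) < -v) (hαv : α ≤ v) : f k + α * ‖k‖ < 0 := by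
  have ht : 0 < ‖k‖ := norm_pos_iff.2 hk0
  have h2 : ‖k‖⁻¹ * f k < -α :=
    lt_of_lt_of_le (by simpa [map_smul] using h1) (by linarith : -v ≤ -α)
  have h3 := mul_lt_mul_of_pos_left h2 ht
  rw [← mul_assoc, mul_inv_cancel₀ ht.ne', one_mul, mul_neg] at h3
  have h4 : α * ‖k‖ = ‖k‖ * α := mul_comm _ _
  linarith


theorem stmt15 (K A : Set E) (hK : IsNontrivialCone K) (hA : IsNontrivialCone A)
    (hcomp : WeaklyCompact (closure (convBase (-K)))) :
    List.TFAE [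
      closure (convBase0 A) ∩ closure (convBase (-K)) = ∅,
      (∃ f : E →L[ℝ] ℝ, ∃ α : ℝ, (f, α) ∈ augWSharpCone K ∧ 0 < α ∧
        (∀ a ∈ A, a ≠ 0 → 0 < f a + α * ‖a‖) ∧
        (∀ k ∈ (-K : Set E), k ≠ 0 → f k + α * ‖k‖ < 0)),
      (∃ f : E →L[ℝ] ℝ, ∃ α : ℝ, (f, α) ∈ augWSharpCone K ∧
        (∀ a ∈ A, a ≠ 0 → 0 < f a + α * ‖a‖) ∧
        (∀ k ∈ (-K : Set E), k ≠ 0 → f k + α * ‖k‖ < 0))] := by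
  have hconvT : Convex ℝ (closure (convBase K)) := (convex_convexHull ℝ _).closure
  have hTD : closure (convBase (-K)) = -closure (convBase K) := closure_convBase_neg K
  tfae_have 1 → 2 := by
    intro h1
    have hCimg : IsClosed ((toWeakSpace ℝ E) '' closure (convBase0 A)) := by
      rw [convBase0, (convex_convexHull ℝ _).toWeakSpace_closure ℝ]
      exact isClosed_closure
    have hdisj : Disjoint ((toWeakSpace ℝ E) '' closure (convBase0 A))
        ((toWeakSpace ℝ E) '' closure (convBase (-K))) := by
      rw [Set.disjoint_image_iff (toWeakSpace ℝ E).injective]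
      exact Set.disjoint_iff_inter_eq_empty.2 h1
    obtain ⟨F, u, v, hFC, huv, hFD⟩ :=
      geometric_hahn_banach_closed_compact
        (((convex_convexHull ℝ _).closure).is_linear_image ⟨map_add _, map_smul _⟩) hCimg
        (((convex_convexHull ℝ _).closure).is_linear_image ⟨map_add _, map_smul _⟩) hcomp hdisj
    set g : E →L[ℝ] ℝ := F.comp (toWeakSpaceCLM ℝ E) with hgdef
    have h0C : (0 : E) ∈ closure (convBase0 A) :=
      subset_closure (subset_convexHull ℝ _ (Or.inl rfl))
    have hu0 : 0 < u := by
      have h : g 0 < u := hFC _ ⟨0, h0C, rfl⟩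
      rwa [map_zero] at h
    set α : ℝ := (u + v) / 2 with hαdef
    have hαu : u < α := by rw [hαdef]; linarith
    have hαv : α < v := by rw [hαdef]; linarith
    have hα0 : 0 < α := lt_trans hu0 hαu
    have hbA : ∀ a ∈ normBase A, -u < (-g) a := by
      intro a ha
      have haC : a ∈ closure (convBase0 A) :=
        subset_closure (subset_convexHull ℝ _ (Or.inr ha))
      have h : g a < u := hFC _ ⟨a, haC, rfl⟩
      simp only [ContinuousLinearMap.neg_apply]
      linarith
    have hbK : ∀ k ∈ normBase (-K), (-g) k < -v := by
      intro k hk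
      have hkD : k ∈ closure (convBase (-K)) :=
        subset_closure (subset_convexHull ℝ _ hk)
      have h : v < g k := hFD _ ⟨k, hkD, rfl⟩
      simp only [ContinuousLinearMap.neg_apply]
      linarith
    have hpos : ∀ a ∈ A, a ≠ 0 → 0 < (-g) a + α * ‖a‖ := by
      intro a ha ha0
      exact scaled_pos ha0 (hbA _ (mem_normBase_smul hA.1 ha ha0)) (le_of_lt hαu)
    have hneg : ∀ k ∈ (-K : Set E), k ≠ 0 → (-g) k + α * ‖k‖ < 0 := by
      intro k hk hk0
      exact scaled_neg hk0 (hbK _ (mem_normBase_smul hK.1.neg hk hk0)) (le_of_lt hαv)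
    have hsharp : (-g) ∈ sharpCone K := by
      intro k hkK hk0
      have h := hneg (-k) (by rwa [Set.mem_neg, neg_neg]) (neg_ne_zero.2 hk0)
      rw [map_neg, norm_neg] at h
      have hk' : 0 < ‖k‖ := norm_pos_iff.2 hk0
      have hαk : 0 < α * ‖k‖ := mul_pos hα0 hk'
      linarith
    have hweak : ∀ y ∈ wClosure (normBase K), α < (-g) y := by
      intro y hy
      have hyT : y ∈ closure (convBase K) :=
        wClosure_subset (fun x hx => subset_closure (subset_convexHull ℝ _ hx))
          hconvT isClosed_closure hy
      have hyD : -y ∈ closure (convBase (-K)) := by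
        rw [hTD, Set.mem_neg, neg_neg]; exact hyT
      have h : v < g (-y) := hFD _ ⟨-y, hyD, rfl⟩
      rw [map_neg] at h
      simp only [ContinuousLinearMap.neg_apply]
      linarith
    exact ⟨-g, α, ⟨le_of_lt hα0, hsharp, hweak⟩, hα0, hpos, hneg⟩
  tfae_have 2 → 3 := by
    rintro ⟨f, α, h1, _, h2, h3⟩
    exact ⟨f, α, h1, h2, h3⟩
  tfae_have 3 → 1 := by
    rintro ⟨f, α, ⟨hα0, hsharp, hw⟩, hApos, hKneg⟩
    have hTimg_closed : IsClosed ((toWeakSpace ℝ E) '' closure (convBase K)) := by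
      rw [convBase, (convex_convexHull ℝ _).toWeakSpace_closure ℝ]
      exact isClosed_closure
    have hTimg_cpt : IsCompact ((toWeakSpace ℝ E) '' closure (convBase K)) := by
      have h1 : closure (convBase K) = -closure (convBase (-K)) := by rw [hTD, neg_neg]
      rw [h1, image_neg_toWeakSpace]
      exact IsCompact.neg hcomp
    have hsubW : normBase K ⊆ closure (convBase K) := fun x hx =>
      subset_closure (subset_convexHull ℝ _ hx)
    have hWcpt : IsCompact (closure ((toWeakSpace ℝ E) '' normBase K)) :=
      hTimg_cpt.of_isClosed_subset isClosed_closure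
        (closure_minimal (Set.image_mono hsubW) hTimg_closed)
    have hWne : (closure ((toWeakSpace ℝ E) '' normBase K)).Nonempty :=
      (((normBase_nonempty hK).image _)).closure
    obtain ⟨z, hz, hmin⟩ := hWcpt.exists_isMinOn hWne ((weak_eval_continuous f).continuousOn)
    set y₀ := (toWeakSpace ℝ E).symm z with hy₀def
    have hy₀ : y₀ ∈ wClosure (normBase K) := ⟨z, hz, rfl⟩
    have hαm : α < f y₀ := hw y₀ hy₀
    have hmono : ∀ y ∈ wClosure (normBase K), f y₀ ≤ f y := by
      rintro y ⟨x, hx, rfl⟩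
      exact isMinOn_iff.1 hmin x hx
    have hDsub : closure (convBase (-K)) ⊆ {x | f x ≤ -(f y₀)} := by
      refine closure_minimal (convexHull_min ?_
        (convex_halfSpace_le ⟨map_add f, map_smul f⟩ _))
        (isClosed_le f.continuous continuous_const)
      intro k hk
      have hk' : -k ∈ normBase K := by
        rw [normBase_neg, Set.mem_neg] at hk
        exact hk
      have h := hmono _ (subset_wClosure _ hk')
      rw [map_neg] at h
      simp only [Set.mem_setOf_eq]
      linarith
    have hCsub : closure (convBase0 A) ⊆ {x | -α ≤ f x} := by
      refine closure_minimal (convexHull_min ?_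
        (convex_halfSpace_ge ⟨map_add f, map_smul f⟩ _))
        (isClosed_le continuous_const f.continuous)
      rintro x (rfl | hx)
      · simp only [Set.mem_setOf_eq, map_zero]
        linarith
      · have hx0 : x ≠ 0 := by
          intro h
          rw [h] at hx
          simpa using hx.2
        have h := hApos x hx.1 hx0
        rw [hx.2] at h
        simp only [Set.mem_setOf_eq]
        linarith
    rw [Set.eq_empty_iff_forall_notMem]
    rintro x ⟨hxC, hxD⟩
    have h1 := hCsub hxC
    have h2 := hDsub hxD
    simp only [Set.mem_setOf_eq] at h1 h2
    linarith
  tfae_finish
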